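/- Let E be a real inner product space and for each n ∈ ℤ let V_n : ℝ → E be differentiable with V_{n+1}(x) + V_n(x) ≠ 0 for all n and x. Suppose that for all n and x: V_n′ = (V_{n+1}+V_n)/‖V_{n+1}+V_n‖² − (V_n+V_{n−1})/‖V_n+V_{n−1}‖². Define W_n := (V_n+V_{n−1})/‖V_n+V_{n−1}‖². Then for all n and x: W_n′ = −P_{W_n}(W_{n+1} − W_{n−1}), where P_A(B) := 2⟨A,B⟩A − ⟨A,A⟩B. Equivalently, W satisfies the polynomial lattice W_x = −P_W(W_1 − W_{−1}). -/

import Mathlib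

open scoped RealInnerProductSpace


/-- if `V` satisfies the discrete Heisenberg spin chain
`V_x = (V₁+V)/‖V₁+V‖² − (V+V₋₁)/‖V+V₋₁‖²`, then `W = (V+V₋₁)/‖V+V₋₁‖²`
satisfies the polynomial lattice `W_x = −P_W(W₁ − W₋₁)`,
where `P_A(B) = 2⟨A,B⟩A − ⟨A,A⟩B`. -/
theorem heisenberg_W_lattice
    (E : Type*) [NormedAddCommGroup E] [InnerProductSpace ℝ E]
    (V : ℤ → ℝ → E)
    (hne : ∀ n x, V (n+1) x + V n x ≠ 0)
    (hV : ∀ (n : ℤ) (x : ℝ), HasDerivAt (V n)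
      ((‖V (n+1) x + V n x‖^2)⁻¹ • (V (n+1) x + V n x)
        - (‖V n x + V (n-1) x‖^2)⁻¹ • (V n x + V (n-1) x)) x)
    (W : ℤ → ℝ → E)
    (hW : ∀ n x, W n x = (‖V n x + V (n-1) x‖^2)⁻¹ • (V n x + V (n-1) x)) :
    ∀ (n : ℤ) (x : ℝ), HasDerivAt (W n)
      (-((2 * (inner ℝ (W n x) (W (n+1) x - W (n-1) x) : ℝ)) • W n x
          - ((inner ℝ (W n x) (W n x) : ℝ)) • (W (n+1) x - W (n-1) x))) x := by
  intro n x
  set U : ℝ → E := fun y => V n y + V (n-1) y with hUdef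
  have hUne : ∀ y, U y ≠ 0 := by
    intro y
    have := hne (n-1) y
    simpa [hUdef] using this
  set D : E := W (n+1) x - W (n-1) x with hD
  -- derivative of U is D
  have hUd : HasDerivAt U D x := by
    have h1 := hV n x
    have h2 := hV (n-1) x
    have e1 : (n:ℤ) - 1 + 1 = n := by ring
    rw [e1] at h2
    have := h1.add h2
    have eD : ((‖V (n+1) x + V n x‖^2)⁻¹ • (V (n+1) x + V n x)
        - (‖V n x + V (n-1) x‖^2)⁻¹ • (V n x + V (n-1) x))
        + ((‖V n x + V (n-1) x‖^2)⁻¹ • (V n x + V (n-1) x)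
        - (‖V (n-1) x + V (n-1-1) x‖^2)⁻¹ • (V (n-1) x + V (n-1-1) x)) = D := by
      rw [hD, hW (n+1) x, hW (n-1) x]
      have e2 : (n:ℤ) + 1 - 1 = n := by ring
      rw [e2]
      abel
    rw [eD] at this
    exact this
  -- scalar function
  have hg : HasDerivAt (fun y => ⟪U y, U y⟫) (2 * ⟪U x, D⟫) x := by
    have := hUd.inner ℝ hUd
    rw [real_inner_comm (U x) D, ← two_mul] at this
    exact this
  have hgx : ⟪U x, U x⟫ ≠ 0 := by
    simpa [real_inner_self_eq_norm_sq] using pow_ne_zero 2 (norm_ne_zero_iff.mpr (hUne x))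
  have hginv : HasDerivAt (fun y => (⟪U y, U y⟫)⁻¹)
      (-(2 * ⟪U x, D⟫) / (⟪U x, U x⟫)^2) x := hg.inv hgx
  have hWd : HasDerivAt (fun y => (⟪U y, U y⟫)⁻¹ • U y)
      ((⟪U x, U x⟫)⁻¹ • D + (-(2 * ⟪U x, D⟫) / (⟪U x, U x⟫)^2) • U x) x :=
    hginv.smul hUd
  have hWeq : W n = fun y => (⟪U y, U y⟫)⁻¹ • U y := by
    funext y
    rw [hW n y, real_inner_self_eq_norm_sq]
  rw [hWeq]
  convert hWd using 1
  simp only [inner_smul_left, inner_smul_right, RCLike.conj_to_real, smul_smul]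
  match_scalars <;> field_simp <;> exact Or.inl (sq _)
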